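/- For every n ≥ 2, the map Φ (applying the transformation table φ to the consecutive pairs of the supplemented word 0·w·0) is defined on every W-path w of order n (φ returns some value on each consecutive pair) and is a bijection from the set of W-paths of order n onto the set of S-paths of order n. -/

import Mathlib

/-- The unit vector in direction `d·π/3`, viewing the plane as `ℂ`. -/
noncomputable def dirU (d : Fin 6) : ℂ :=
  Complex.exp ((d : ℕ) * Real.pi / 3 * Complex.I)

/-- The position sequence of a direction word: `p₀ = 0`, `p_{m+1} = p_m + dirU (ds_m)`. -/
noncomputable def posSeq (ds : List (Fin 6)) (m : ℕ) : ℂ :=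
  ((ds.take m).map dirU).sum

/-- The grid point `P(i,j) = i·u(0) + j·u(1)`. -/
noncomputable def Pt (i j : ℕ) : ℂ := (i : ℂ) * dirU 0 + (j : ℂ) * dirU 1

/-- The triangular number `T_n = n(n+1)/2`. -/
def triNum (n : ℕ) : ℕ := n * (n + 1) / 2

/-- The inscribed grid `G_n = {P(i,j) : i + j ≤ n - 1}`. -/
def inscribedGrid (n : ℕ) : Set ℂ := {p | ∃ i j : ℕ, i + j ≤ n - 1 ∧ p = Pt i j}

/-- An H-path of order `n`: a direction word of length `T_n - 1` whose position sequence
is injective with image `G_n`, starting at `P(0,0) = 0` and ending at `P(n-1,0)`. -/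
def IsHPath (n : ℕ) (w : List (Fin 6)) : Prop :=
  w.length = triNum n - 1 ∧
  (Function.Injective fun m : Fin (w.length + 1) => posSeq w m) ∧
  (Set.range fun m : Fin (w.length + 1) => posSeq w m) = inscribedGrid n ∧
  posSeq w 0 = Pt 0 0 ∧
  posSeq w w.length = Pt (n - 1) 0

/-- `(a, b)` is a forbidden turn if `b ≡ a + 4 (mod 6)` with `a` even, or
`b ≡ a + 2 (mod 6)` with `a` odd (addition in `Fin 6` is mod 6). -/
def ForbiddenTurn (a b : Fin 6) : Prop :=
  (Even (a : ℕ) ∧ b = a + 4) ∨ (Odd (a : ℕ) ∧ b = a + 2)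

/-- A W-path of order `n`: an H-path whose supplemented word `0·w·0` contains no
forbidden turn among its consecutive pairs. -/
def IsWPath (n : ℕ) (w : List (Fin 6)) : Prop :=
  IsHPath n w ∧ List.Chain' (fun a b => ¬ ForbiddenTurn a b) ((0 : Fin 6) :: (w ++ [0]))

/-- The `m`-th edge of a direction word: the closed segment `[p_m, p_{m+1}]`. -/
noncomputable def edgeSeg (s : List (Fin 6)) (m : ℕ) : Set ℂ :=
  segment ℝ (posSeq s m) (posSeq s (m + 1))

/-- `e` is a side of the dark (upward) tile `Δ(i,j)`, i.e. one of its three closed edges. -/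
def IsSideOf (e : Set ℂ) (i j : ℕ) : Prop :=
  e = segment ℝ (Pt i j) (Pt (i + 1) j) ∨
  e = segment ℝ (Pt (i + 1) j) (Pt i (j + 1)) ∨
  e = segment ℝ (Pt i j) (Pt i (j + 1))

/-- An S-path of order `n`: a direction word of length `T_n` from `0` to `n·u(0)`,
whose edges are pairwise distinct sides of dark tiles, such that the assignment of
edges to dark tiles is a bijection onto the set of dark tiles (indexed by base points
`(i,j)` with `i + j ≤ n - 1`). -/
def IsSPath (n : ℕ) (s : List (Fin 6)) : Prop :=
  s.length = triNum n ∧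
  posSeq s 0 = 0 ∧
  posSeq s s.length = (n : ℂ) * dirU 0 ∧
  (∀ m m' : Fin s.length, edgeSeg s m = edgeSeg s m' → m = m') ∧
  ∃ t : Fin s.length → {p : ℕ × ℕ // p.1 + p.2 ≤ n - 1},
    (∀ m : Fin s.length, IsSideOf (edgeSeg s (m : ℕ)) (t m).1.1 (t m).1.2) ∧ Function.Bijective t

/-- The partial transformation table `φ` of Table 1. -/
def phiTable (a b : Fin 6) : Option (Fin 6) :=
  if a = 0 ∨ a = 1 then
    if b = 0 then some 0 else if b = 1 then some 1 else if b = 2 then some 1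
    else if b = 5 then some 0 else none
  else if a = 2 ∨ a = 3 then
    if b = 1 then some 2 else if b = 2 then some 2 else if b = 3 then some 3
    else if b = 4 then some 3 else none
  else
    if b = 0 then some 5 else if b = 3 then some 4 else if b = 4 then some 4
    else if b = 5 then some 5 else none

/-- The consecutive pairs of the supplemented word `0·w·0`. -/
def suppPairs (w : List (Fin 6)) : List (Fin 6 × Fin 6) :=
  ((0 : Fin 6) :: (w ++ [0])).zip (w ++ [0])

/-- `Φ(w)`: apply `φ` to the consecutive pairs of the supplemented word `0·w·0`
(using the default value `0` where `φ` is undefined). -/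
def PhiWord (w : List (Fin 6)) : List (Fin 6) :=
  (suppPairs w).map fun p => (phiTable p.1 p.2).getD 0

noncomputable section

/-- ζ = e^{iπ/3}. -/
def zeta : ℂ := Complex.exp (↑(Real.pi / 3) * Complex.I)

lemma zeta_re : zeta.re = 1/2 := by
  rw [zeta, Complex.exp_ofReal_mul_I_re, Real.cos_pi_div_three]
lemma zeta_im : zeta.im = Real.sqrt 3 / 2 := by
  rw [zeta, Complex.exp_ofReal_mul_I_im, Real.sin_pi_div_three]

lemma sqrt3_pos : (0:ℝ) < Real.sqrt 3 := Real.sqrt_pos.2 (by norm_num)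

lemma zeta_cube : zeta ^ 3 = -1 := by
  rw [zeta, ← Complex.exp_nat_mul]
  have h3 : ((3:ℕ) : ℂ) * (↑(Real.pi / 3) * Complex.I) = Real.pi * Complex.I := by
    push_cast; ring
  rw [h3, Complex.exp_pi_mul_I]

lemma zeta_sq : zeta ^ 2 = zeta - 1 := by
  have h : (zeta + 1) * (zeta ^ 2 - zeta + 1) = zeta ^ 3 + 1 := by ring
  rw [zeta_cube] at h
  have hz : zeta + 1 ≠ 0 := by
    intro h0
    have him : zeta.im = 0 := by
      have := congrArg Complex.im h0; simpa using this
    rw [zeta_im] at him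
    linarith [sqrt3_pos]
  have h0 : (zeta + 1) * (zeta ^ 2 - zeta + 1) = 0 := by rw [h]; ring
  rcases mul_eq_zero.mp h0 with h' | h'
  · exact absurd h' hz
  · linear_combination h'

/-- Independence: A + B·ζ = 0 → A = 0 ∧ B = 0 for real A, B. -/
lemma zeta_indep {A B : ℝ} (h : (A : ℂ) + (B : ℂ) * zeta = 0) : A = 0 ∧ B = 0 := by
  have him := congrArg Complex.im h
  have hre := congrArg Complex.re h
  simp [Complex.add_im, Complex.mul_im, Complex.add_re, Complex.mul_re, zeta_im, zeta_re]
    at him hre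
  constructor
  · nlinarith [sqrt3_pos]
  · nlinarith [sqrt3_pos]

lemma dirU_eq (d : Fin 6) : dirU d = zeta ^ (d : ℕ) := by
  rw [dirU, zeta, ← Complex.exp_nat_mul]
  congr 1
  push_cast; ring

lemma dirU0 : dirU 0 = 1 := by rw [dirU_eq]; norm_num
lemma dirU1 : dirU 1 = zeta := by rw [dirU_eq]; norm_num
lemma dirU2 : dirU 2 = zeta - 1 := by rw [dirU_eq]; exact_mod_cast zeta_sq
lemma dirU3 : dirU 3 = -1 := by rw [dirU_eq]; exact_mod_cast zeta_cube
lemma dirU4 : dirU 4 = -zeta := by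
  rw [dirU_eq]
  show zeta ^ 4 = -zeta
  have : zeta ^ 4 = zeta ^ 3 * zeta := by ring
  rw [this, zeta_cube]; ring
lemma dirU5 : dirU 5 = 1 - zeta := by
  rw [dirU_eq]
  show zeta ^ 5 = 1 - zeta
  have : zeta ^ 5 = zeta ^ 3 * zeta ^ 2 := by ring
  rw [this, zeta_cube, zeta_sq]; ring

lemma Pt_eq (i j : ℕ) : Pt i j = (i : ℂ) + (j : ℂ) * zeta := by
  rw [Pt, dirU0, dirU1]; ring

/-- Master grid-equality lemma. -/
lemma grid_eq {i j k l : ℕ} {e1 e2 : ℤ} :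
    Pt i j = Pt k l + (e1 : ℂ) + (e2 : ℂ) * zeta ↔ ((i:ℤ) = k + e1 ∧ (j:ℤ) = l + e2) := by
  constructor
  · intro h
    rw [Pt_eq, Pt_eq] at h
    have h' : ((((i:ℤ) - k - e1 : ℤ) : ℝ) : ℂ) + ((((j:ℤ) - l - e2 : ℤ) : ℝ) : ℂ) * zeta = 0 := by
      push_cast
      linear_combination h
    obtain ⟨hA, hB⟩ := zeta_indep h'
    constructor
    · have : ((i:ℤ) - k - e1 : ℤ) = 0 := by exact_mod_cast hA
      omega
    · have : ((j:ℤ) - l - e2 : ℤ) = 0 := by exact_mod_cast hB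
      omega
  · rintro ⟨h1, h2⟩
    rw [Pt_eq, Pt_eq]
    have h1' : (i : ℂ) = (k : ℂ) + e1 := by exact_mod_cast congrArg (fun z : ℤ => (z : ℂ)) h1
    have h2' : (j : ℂ) = (l : ℂ) + e2 := by exact_mod_cast congrArg (fun z : ℤ => (z : ℂ)) h2
    rw [h1', h2']; ring

lemma Pt_inj {i j k l : ℕ} (h : Pt i j = Pt k l) : i = k ∧ j = l := by
  have := grid_eq (e1 := 0) (e2 := 0) (k := k) (l := l) (i := i) (j := j) |>.mp (by
    simpa using h)
  omega

lemma Pt_right (i j : ℕ) : Pt (i+1) j = Pt i j + 1 := by rw [Pt_eq, Pt_eq]; push_cast; ring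
lemma Pt_up (i j : ℕ) : Pt i (j+1) = Pt i j + zeta := by rw [Pt_eq, Pt_eq]; push_cast; ring
lemma Pt_zero : Pt 0 0 = 0 := by rw [Pt_eq]; push_cast; ring

end
section SegLemma

variable {x y x' y' : ℂ}

lemma mem_seg_param (z : ℂ) (h : z ∈ segment ℝ x y) :
    ∃ t : ℝ, 0 ≤ t ∧ t ≤ 1 ∧ z = x + t • (y - x) := by
  rw [segment_eq_image ℝ] at h
  obtain ⟨t, ⟨ht0, ht1⟩, hz⟩ := h
  exact ⟨t, ht0, ht1, by rw [← hz]; module⟩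

/-- Equal segments have (up to order) equal endpoints, provided one is nondegenerate. -/
lemma seg_eq (h : segment ℝ x y = segment ℝ x' y') (hxy : x ≠ y) :
    (x = x' ∧ y = y') ∨ (x = y' ∧ y = x') := by
  obtain ⟨t, ht0, ht1, hXp⟩ := mem_seg_param x' (h ▸ left_mem_segment ℝ x' y')
  obtain ⟨t', ht'0, ht'1, hYp⟩ := mem_seg_param y' (h ▸ right_mem_segment ℝ x' y')
  obtain ⟨s, hs0, hs1, hX⟩ := mem_seg_param x (h ▸ left_mem_segment ℝ x y)
  obtain ⟨σ, hσ0, hσ1, hY⟩ := mem_seg_param y (h ▸ right_mem_segment ℝ x y)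
  -- x = x' + s (y' - x') ; substitute
  have hx_comb : ((1 - s) * t + s * t') • (y - x) = 0 := by
    have : x = x + ((1 - s) * t + s * t') • (y - x) := by
      calc x = x' + s • (y' - x') := hX
        _ = (x + t • (y - x)) + s • ((x + t' • (y - x)) - (x + t • (y - x))) := by
              rw [← hXp, ← hYp]
        _ = x + ((1 - s) * t + s * t') • (y - x) := by module
    have := congrArg (fun z => z - x) this
    simpa using this.symm
  have hy_comb : ((1 - σ) * t + σ * t' - 1) • (y - x) = 0 := by
    have : y = x + ((1 - σ) * t + σ * t') • (y - x) := by
      calc y = x' + σ • (y' - x') := hY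
        _ = (x + t • (y - x)) + σ • ((x + t' • (y - x)) - (x + t • (y - x))) := by
              rw [← hXp, ← hYp]
        _ = x + ((1 - σ) * t + σ * t') • (y - x) := by module
    have h2 : y - x = ((1 - σ) * t + σ * t') • (y - x) := by
      have := congrArg (fun z => z - x) this; simpa using this
    have : ((1 - σ) * t + σ * t') • (y - x) - (1:ℝ) • (y - x) = 0 := by
      rw [← h2]; simp
    calc ((1 - σ) * t + σ * t' - 1) • (y - x)
        = ((1 - σ) * t + σ * t') • (y - x) - (1:ℝ) • (y - x) := by module
      _ = 0 := this
  have hne : y - x ≠ 0 := sub_ne_zero.2 (Ne.symm hxy)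
  have hk : (1 - s) * t + s * t' = 0 := by
    rcases smul_eq_zero.mp hx_comb with h' | h'
    · exact h'
    · exact absurd h' hne
  have hk' : (1 - σ) * t + σ * t' = 1 := by
    rcases smul_eq_zero.mp hy_comb with h' | h'
    · linarith
    · exact absurd h' hne
  have h1 : (1 - s) * t = 0 := by nlinarith
  have h2 : s * t' = 0 := by nlinarith
  -- rewrite hk' as (1-σ)(1-t) + σ(1-t') = 0
  have h3 : (1 - σ) * (1 - t) = 0 := by nlinarith
  have h4 : σ * (1 - t') = 0 := by nlinarith
  by_cases ht : t = 0
  · left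
    have hx' : x' = x := by rw [hXp, ht]; simp
    have hσ : σ = 1 := by
      rcases mul_eq_zero.mp h3 with h' | h'
      · linarith
      · linarith
    have ht' : t' = 1 := by
      rcases mul_eq_zero.mp h4 with h' | h'
      · linarith
      · linarith
    have hy' : y' = y := by rw [hYp, ht']; module
    exact ⟨hx'.symm, hy'.symm⟩
  · right
    have hs : s = 1 := by
      rcases mul_eq_zero.mp h1 with h' | h'
      · linarith
      · exact absurd h' ht
    have ht' : t' = 0 := by
      rcases mul_eq_zero.mp h2 with h' | h'
      · linarith
      · exact h'
    have hy' : y' = x := by rw [hYp, ht']; simp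
    have hσ : σ = 0 := by
      rcases mul_eq_zero.mp h4 with h' | h'
      · exact h'
      · linarith
    have ht1' : t = 1 := by
      rcases mul_eq_zero.mp h3 with h' | h'
      · linarith
      · linarith
    have hx' : x' = y := by rw [hXp, ht1']; module
    exact ⟨hy'.symm, hx'.symm⟩

end SegLemma
noncomputable section

/-- offset of a direction class. -/
def cVec (a : Fin 6) : ℂ := if (a:ℕ) ≤ 1 then 0 else if (a:ℕ) ≤ 3 then 1 else zeta

lemma cVec0 : cVec 0 = 0 := by
  rw [cVec]
  rw [if_pos (by decide)]
lemma cVec1 : cVec 1 = 0 := by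
  rw [cVec]
  rw [if_pos (by decide)]
lemma cVec2 : cVec 2 = 1 := by
  rw [cVec]
  rw [if_neg (by decide), if_pos (by decide)]
lemma cVec3 : cVec 3 = 1 := by
  rw [cVec]
  rw [if_neg (by decide), if_pos (by decide)]
lemma cVec4 : cVec 4 = zeta := by
  rw [cVec]
  rw [if_neg (by decide), if_neg (by decide)]
lemma cVec5 : cVec 5 = zeta := by
  rw [cVec]
  rw [if_neg (by decide), if_neg (by decide)]

lemma zconst_ne {e1 e2 : ℤ} (h : ¬(e1 = 0 ∧ e2 = 0)) : (e1:ℂ) + (e2:ℂ) * zeta ≠ 0 := by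
  intro h0
  have h1 : ((e1:ℝ):ℂ) + ((e2:ℝ):ℂ) * zeta = 0 := by push_cast; push_cast at h0; linear_combination h0
  obtain ⟨hA, hB⟩ := zeta_indep h1
  exact h ⟨by exact_mod_cast hA, by exact_mod_cast hB⟩

lemma Pt_ne_bot {i j : ℕ} : Pt i j ≠ Pt (i+1) j := by
  intro h; have := Pt_inj h; omega
lemma Pt_ne_hyp {i j : ℕ} : Pt (i+1) j ≠ Pt i (j+1) := by
  intro h; have := Pt_inj h; omega
lemma Pt_ne_left {i j : ℕ} : Pt i j ≠ Pt i (j+1) := by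
  intro h; have := Pt_inj h; omega

set_option maxHeartbeats 1000000 in
/-- A segment can be the side of at most one dark tile. -/
lemma side_unique {e : Set ℂ} {i j i' j' : ℕ}
    (h1 : IsSideOf e i j) (h2 : IsSideOf e i' j') : i = i' ∧ j = j' := by
  rcases h1 with h1 | h1 | h1 <;> rcases h2 with h2 | h2 | h2 <;>
    (rw [h1] at h2;
     rcases seg_eq h2 (by first | exact Pt_ne_bot | exact Pt_ne_hyp | exact Pt_ne_left)
       with ⟨ha, hb⟩ | ⟨ha, hb⟩ <;>
      (rcases Pt_inj ha with ⟨u1, u2⟩; rcases Pt_inj hb with ⟨u3, u4⟩; omega))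

lemma side_start0 {q : ℂ} {i j : ℕ}
    (h : IsSideOf (segment ℝ q (q + (1:ℂ))) i j) : q = Pt i j := by
  have hne : q ≠ q + (1:ℂ) := by
    intro h0
    have h1 : ((1:ℤ):ℂ) + ((0:ℤ):ℂ) * zeta = 0 := by push_cast; linear_combination h0.symm
    exact zconst_ne (by omega) h1
  rcases h with h | h | h <;>
    rcases seg_eq h hne with ⟨ha, hb⟩ | ⟨ha, hb⟩
  · exact ha
  · exfalso
    rw [ha, Pt_eq, Pt_eq] at hb
    exact zconst_ne (e1 := 2) (e2 := 0) (by omega) (by push_cast; push_cast at hb; linear_combination hb)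
  · exfalso
    rw [ha, Pt_eq, Pt_eq] at hb
    exact zconst_ne (e1 := 2) (e2 := -1) (by omega) (by push_cast; push_cast at hb; linear_combination hb)
  · exfalso
    rw [ha, Pt_eq, Pt_eq] at hb
    exact zconst_ne (e1 := 0) (e2 := 1) (by omega) (by push_cast; push_cast at hb; linear_combination hb)
  · exfalso
    rw [ha, Pt_eq, Pt_eq] at hb
    exact zconst_ne (e1 := 1) (e2 := -1) (by omega) (by push_cast; push_cast at hb; linear_combination hb)
  · exfalso
    rw [ha, Pt_eq, Pt_eq] at hb
    exact zconst_ne (e1 := 1) (e2 := 1) (by omega) (by push_cast; push_cast at hb; linear_combination hb)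

lemma side_start1 {q : ℂ} {i j : ℕ}
    (h : IsSideOf (segment ℝ q (q + zeta)) i j) : q = Pt i j := by
  have hne : q ≠ q + zeta := by
    intro h0
    have h1 : ((0:ℤ):ℂ) + ((1:ℤ):ℂ) * zeta = 0 := by push_cast; linear_combination h0.symm
    exact zconst_ne (by omega) h1
  rcases h with h | h | h <;>
    rcases seg_eq h hne with ⟨ha, hb⟩ | ⟨ha, hb⟩
  · exfalso
    rw [ha, Pt_eq, Pt_eq] at hb
    exact zconst_ne (e1 := -1) (e2 := 1) (by omega) (by push_cast; push_cast at hb; linear_combination hb)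
  · exfalso
    rw [ha, Pt_eq, Pt_eq] at hb
    exact zconst_ne (e1 := 1) (e2 := 1) (by omega) (by push_cast; push_cast at hb; linear_combination hb)
  · exfalso
    rw [ha, Pt_eq, Pt_eq] at hb
    exact zconst_ne (e1 := 1) (e2 := 0) (by omega) (by push_cast; push_cast at hb; linear_combination hb)
  · exfalso
    rw [ha, Pt_eq, Pt_eq] at hb
    exact zconst_ne (e1 := -1) (e2 := 2) (by omega) (by push_cast; push_cast at hb; linear_combination hb)
  · exact ha
  · exfalso
    rw [ha, Pt_eq, Pt_eq] at hb
    exact zconst_ne (e1 := 0) (e2 := 2) (by omega) (by push_cast; push_cast at hb; linear_combination hb)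

lemma side_start2 {q : ℂ} {i j : ℕ}
    (h : IsSideOf (segment ℝ q (q + (zeta - 1))) i j) : q = Pt (i+1) j := by
  have hne : q ≠ q + (zeta - 1) := by
    intro h0
    have h1 : ((-1:ℤ):ℂ) + ((1:ℤ):ℂ) * zeta = 0 := by push_cast; linear_combination h0.symm
    exact zconst_ne (by omega) h1
  rcases h with h | h | h <;>
    rcases seg_eq h hne with ⟨ha, hb⟩ | ⟨ha, hb⟩
  · exfalso
    rw [ha, Pt_eq, Pt_eq] at hb
    exact zconst_ne (e1 := -2) (e2 := 1) (by omega) (by push_cast; push_cast at hb; linear_combination hb)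
  · exfalso
    rw [ha, Pt_eq, Pt_eq] at hb
    exact zconst_ne (e1 := 0) (e2 := 1) (by omega) (by push_cast; push_cast at hb; linear_combination hb)
  · exact ha
  · exfalso
    rw [ha, Pt_eq, Pt_eq] at hb
    exact zconst_ne (e1 := -2) (e2 := 2) (by omega) (by push_cast; push_cast at hb; linear_combination hb)
  · exfalso
    rw [ha, Pt_eq, Pt_eq] at hb
    exact zconst_ne (e1 := -1) (e2 := 0) (by omega) (by push_cast; push_cast at hb; linear_combination hb)
  · exfalso
    rw [ha, Pt_eq, Pt_eq] at hb
    exact zconst_ne (e1 := -1) (e2 := 2) (by omega) (by push_cast; push_cast at hb; linear_combination hb)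

lemma side_start3 {q : ℂ} {i j : ℕ}
    (h : IsSideOf (segment ℝ q (q + (-1:ℂ))) i j) : q = Pt (i+1) j := by
  have hne : q ≠ q + (-1:ℂ) := by
    intro h0
    have h1 : ((-1:ℤ):ℂ) + ((0:ℤ):ℂ) * zeta = 0 := by push_cast; linear_combination h0.symm
    exact zconst_ne (by omega) h1
  rcases h with h | h | h <;>
    rcases seg_eq h hne with ⟨ha, hb⟩ | ⟨ha, hb⟩
  · exfalso
    rw [ha, Pt_eq, Pt_eq] at hb
    exact zconst_ne (e1 := -2) (e2 := 0) (by omega) (by push_cast; push_cast at hb; linear_combination hb)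
  · exact ha
  · exfalso
    rw [ha, Pt_eq, Pt_eq] at hb
    exact zconst_ne (e1 := 0) (e2 := -1) (by omega) (by push_cast; push_cast at hb; linear_combination hb)
  · exfalso
    rw [ha, Pt_eq, Pt_eq] at hb
    exact zconst_ne (e1 := -2) (e2 := 1) (by omega) (by push_cast; push_cast at hb; linear_combination hb)
  · exfalso
    rw [ha, Pt_eq, Pt_eq] at hb
    exact zconst_ne (e1 := -1) (e2 := -1) (by omega) (by push_cast; push_cast at hb; linear_combination hb)
  · exfalso
    rw [ha, Pt_eq, Pt_eq] at hb
    exact zconst_ne (e1 := -1) (e2 := 1) (by omega) (by push_cast; push_cast at hb; linear_combination hb)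

lemma side_start4 {q : ℂ} {i j : ℕ}
    (h : IsSideOf (segment ℝ q (q + (-zeta))) i j) : q = Pt i (j+1) := by
  have hne : q ≠ q + (-zeta) := by
    intro h0
    have h1 : ((0:ℤ):ℂ) + ((-1:ℤ):ℂ) * zeta = 0 := by push_cast; linear_combination h0.symm
    exact zconst_ne (by omega) h1
  rcases h with h | h | h <;>
    rcases seg_eq h hne with ⟨ha, hb⟩ | ⟨ha, hb⟩
  · exfalso
    rw [ha, Pt_eq, Pt_eq] at hb
    exact zconst_ne (e1 := -1) (e2 := -1) (by omega) (by push_cast; push_cast at hb; linear_combination hb)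
  · exfalso
    rw [ha, Pt_eq, Pt_eq] at hb
    exact zconst_ne (e1 := 1) (e2 := -1) (by omega) (by push_cast; push_cast at hb; linear_combination hb)
  · exfalso
    rw [ha, Pt_eq, Pt_eq] at hb
    exact zconst_ne (e1 := 1) (e2 := -2) (by omega) (by push_cast; push_cast at hb; linear_combination hb)
  · exfalso
    rw [ha, Pt_eq, Pt_eq] at hb
    exact zconst_ne (e1 := -1) (e2 := 0) (by omega) (by push_cast; push_cast at hb; linear_combination hb)
  · exfalso
    rw [ha, Pt_eq, Pt_eq] at hb
    exact zconst_ne (e1 := 0) (e2 := -2) (by omega) (by push_cast; push_cast at hb; linear_combination hb)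
  · exact ha

lemma side_start5 {q : ℂ} {i j : ℕ}
    (h : IsSideOf (segment ℝ q (q + (1 - zeta))) i j) : q = Pt i (j+1) := by
  have hne : q ≠ q + (1 - zeta) := by
    intro h0
    have h1 : ((1:ℤ):ℂ) + ((-1:ℤ):ℂ) * zeta = 0 := by push_cast; linear_combination h0.symm
    exact zconst_ne (by omega) h1
  rcases h with h | h | h <;>
    rcases seg_eq h hne with ⟨ha, hb⟩ | ⟨ha, hb⟩
  · exfalso
    rw [ha, Pt_eq, Pt_eq] at hb
    exact zconst_ne (e1 := 0) (e2 := -1) (by omega) (by push_cast; push_cast at hb; linear_combination hb)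
  · exfalso
    rw [ha, Pt_eq, Pt_eq] at hb
    exact zconst_ne (e1 := 2) (e2 := -1) (by omega) (by push_cast; push_cast at hb; linear_combination hb)
  · exfalso
    rw [ha, Pt_eq, Pt_eq] at hb
    exact zconst_ne (e1 := 2) (e2 := -2) (by omega) (by push_cast; push_cast at hb; linear_combination hb)
  · exact ha
  · exfalso
    rw [ha, Pt_eq, Pt_eq] at hb
    exact zconst_ne (e1 := 1) (e2 := -2) (by omega) (by push_cast; push_cast at hb; linear_combination hb)
  · exfalso
    rw [ha, Pt_eq, Pt_eq] at hb
    exact zconst_ne (e1 := 1) (e2 := 0) (by omega) (by push_cast; push_cast at hb; linear_combination hb)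


lemma dirU_vals : dirU 0 = 1 ∧ dirU 1 = zeta ∧ dirU 2 = zeta - 1 ∧ dirU 3 = -1 ∧
    dirU 4 = -zeta ∧ dirU 5 = 1 - zeta :=
  ⟨dirU0, dirU1, dirU2, dirU3, dirU4, dirU5⟩

/-- Reverse side lemma: if a step in direction `o` is a side of tile `(i,j)`, the
starting point is `Pt i j + cVec o`. -/
lemma side_start {q : ℂ} {o : Fin 6} {i j : ℕ}
    (h : IsSideOf (segment ℝ q (q + dirU o)) i j) : q = Pt i j + cVec o := by
  rcases (by omega : o = 0 ∨ o = 1 ∨ o = 2 ∨ o = 3 ∨ o = 4 ∨ o = 5)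
    with rfl | rfl | rfl | rfl | rfl | rfl
  · rw [dirU0] at h; rw [side_start0 h, cVec0]; ring
  · rw [dirU1] at h; rw [side_start1 h, cVec1]; ring
  · rw [dirU2] at h; rw [side_start2 h, cVec2, Pt_right]
  · rw [dirU3] at h; rw [side_start3 h, cVec3, Pt_right]
  · rw [dirU4] at h; rw [side_start4 h, cVec4, Pt_up]
  · rw [dirU5] at h; rw [side_start5 h, cVec5, Pt_up]

/-- Forward side lemma. -/
lemma side_fwd (o : Fin 6) (i j : ℕ) :
    IsSideOf (segment ℝ (Pt i j + cVec o) (Pt i j + cVec o + dirU o)) i j := by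
  rcases (by omega : o = 0 ∨ o = 1 ∨ o = 2 ∨ o = 3 ∨ o = 4 ∨ o = 5)
    with rfl | rfl | rfl | rfl | rfl | rfl
  · left; rw [dirU0, cVec0, Pt_right]; congr 1 <;> ring
  · right; right; rw [dirU1, cVec1, Pt_up]; congr 1 <;> ring
  · right; left; rw [dirU2, cVec2, Pt_right, Pt_up]; congr 1 <;> ring
  · left; rw [dirU3, cVec3, Pt_right, segment_symm]; congr 1 <;> ring
  · right; right; rw [dirU4, cVec4, Pt_up, segment_symm]; congr 1 <;> ring
  · right; left; rw [dirU5, cVec5, Pt_right, Pt_up, segment_symm]; congr 1 <;> ring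

end
section Tables

/-- Composability of two successive output letters. -/
def Compat (o o' : Fin 6) : Prop :=
  ∃ a b c : Fin 6, phiTable a b = some o ∧ phiTable b c = some o'

instance : ∀ o o', Decidable (Compat o o') := fun o o' => by
  unfold Compat; infer_instance

/-- Decoding table: middle letter from two successive output letters. -/
def psi (o o' : Fin 6) : Fin 6 :=
  if o = 0 ∨ o = 5 then (if (o' : ℕ) ≤ 1 then 0 else 5)
  else if o = 1 ∨ o = 2 then (if (o' : ℕ) ≤ 1 then 1 else 2)
  else (if (o' : ℕ) ≤ 3 then 3 else 4)

lemma psi_spec : ∀ a b c o o' : Fin 6,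
    phiTable a b = some o → phiTable b c = some o' → psi o o' = b := by decide

lemma L_first : ∀ o o' : Fin 6, (o = 0 ∨ o = 1) → Compat o o' →
    phiTable 0 (psi o o') = some o := by decide

lemma L_mid : ∀ o o' o'' : Fin 6, Compat o o' → Compat o' o'' →
    phiTable (psi o o') (psi o' o'') = some o' := by decide

lemma L_end : ∀ o o' : Fin 6, Compat o o' → (o' = 0 ∨ o' = 5) →
    phiTable (psi o o') 0 = some o' := by decide

lemma undef_iff : ∀ a b : Fin 6,
    ¬ (phiTable a b).isSome ↔ (ForbiddenTurn a b ∨ b = a + 3) := by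
  have : ∀ a b : Fin 6,
      ¬ (phiTable a b).isSome ↔ ((Decidable.decide (Even (a : ℕ)) ∧ b = a + 4) ∨
        (¬ Decidable.decide (Even (a : ℕ)) ∧ b = a + 2) ∨ b = a + 3) := by decide
  intro a b
  rw [this a b, ForbiddenTurn, ← Nat.not_even_iff_odd]
  by_cases h : Even (a : ℕ) <;> simp [h] <;> tauto

lemma def_not_forbidden {a b : Fin 6} (h : (phiTable a b).isSome) : ¬ ForbiddenTurn a b := by
  intro hf
  exact (undef_iff a b).mpr (Or.inl hf) h

lemma class_phi : ∀ a b o : Fin 6, phiTable a b = some o →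
    (((a : ℕ) ≤ 1) = ((o : ℕ) ≤ 1)) ∧ (((a : ℕ) ≤ 3) = ((o : ℕ) ≤ 3)) := by decide

lemma cVec_phi {a b o : Fin 6} (h : phiTable a b = some o) : cVec a = cVec o := by
  obtain ⟨h1, h2⟩ := class_phi a b o h
  simp only [cVec, h1, h2]

lemma fin6_cases (o : Fin 6) : o = 0 ∨ o = 1 ∨ o = 2 ∨ o = 3 ∨ o = 4 ∨ o = 5 := by omega

lemma step_c : ∀ a b o : Fin 6, phiTable a b = some o →
    cVec a + dirU o = dirU b + cVec b := by
  intro a b o h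
  rcases fin6_cases a with rfl|rfl|rfl|rfl|rfl|rfl <;>
    rcases fin6_cases b with rfl|rfl|rfl|rfl|rfl|rfl <;>
    simp [phiTable] at h <;> subst h <;>
    (simp only [dirU0, dirU1, dirU2, dirU3, dirU4, dirU5,
        cVec0, cVec1, cVec2, cVec3, cVec4, cVec5]; ring)

lemma noncompat : ∀ o o' : Fin 6, ¬ Compat o o' →
    o' = o + 3 ∨ cVec o + dirU o = cVec o' := by
  intro o o' h
  rcases fin6_cases o with rfl|rfl|rfl|rfl|rfl|rfl <;>
    rcases fin6_cases o' with rfl|rfl|rfl|rfl|rfl|rfl <;>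
    first
      | exact absurd (by decide) h
      | (left; rfl)
      | (right; simp only [dirU0, dirU1, dirU2, dirU3, dirU4, dirU5,
          cVec0, cVec1, cVec2, cVec3, cVec4, cVec5]; ring)

lemma dirU_add3 (a : Fin 6) : dirU (a + 3) = - dirU a := by
  rcases fin6_cases a with rfl|rfl|rfl|rfl|rfl|rfl <;>
    simp only [show ((0:Fin 6)+3 = 3) from rfl, show ((1:Fin 6)+3 = 4) from rfl,
      show ((2:Fin 6)+3 = 5) from rfl, show ((3:Fin 6)+3 = 0) from rfl,
      show ((4:Fin 6)+3 = 1) from rfl, show ((5:Fin 6)+3 = 2) from rfl,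
      dirU0, dirU1, dirU2, dirU3, dirU4, dirU5] <;> ring

end Tables
section Plumbing

/-- The supplemented word `0 · w · 0` as a function `ℕ → Fin 6` (default 0). -/
def aF (w : List (Fin 6)) (m : ℕ) : Fin 6 := ((0 : Fin 6) :: (w ++ [0])).getD m 0

lemma aF_zero (w : List (Fin 6)) : aF w 0 = 0 := rfl

lemma aF_succ (w : List (Fin 6)) (m : ℕ) : aF w (m + 1) = (w ++ [(0 : Fin 6)]).getD m 0 := rfl

lemma aF_get (w : List (Fin 6)) (m : ℕ) (h : m < w.length) :
    aF w (m + 1) = w[m] := by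
  rw [aF_succ]
  rw [List.getD_eq_getElem _ _ (by simp; omega), List.getElem_append_left h]

lemma aF_last (w : List (Fin 6)) : aF w (w.length + 1) = 0 := by
  rw [aF_succ]
  rw [List.getD_eq_getElem _ _ (by simp), List.getElem_append_right (by omega)]
  simp

lemma suppPairs_length (w : List (Fin 6)) : (suppPairs w).length = w.length + 1 := by
  simp [suppPairs]

lemma suppPairs_get (w : List (Fin 6)) (m : ℕ) (h : m < w.length + 1) :
    (suppPairs w)[m]'(by rw [suppPairs_length]; exact h) = (aF w m, aF w (m + 1)) := by
  unfold suppPairs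
  rw [List.getElem_zip]
  congr 1
  · rcases m with _ | m
    · rfl
    · rw [List.getElem_cons_succ]
      rw [aF_succ, List.getD_eq_getElem _ _ (by simp; omega)]
  · rw [aF_succ, List.getD_eq_getElem _ _ (by simp; omega)]

lemma mem_suppPairs {w : List (Fin 6)} {p : Fin 6 × Fin 6} (hp : p ∈ suppPairs w) :
    ∃ m, m < w.length + 1 ∧ p = (aF w m, aF w (m + 1)) := by
  obtain ⟨m, hm, he⟩ := List.mem_iff_getElem.mp hp
  rw [suppPairs_length] at hm
  exact ⟨m, hm, by rw [← he, suppPairs_get w m hm]⟩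

lemma phiWord_length (w : List (Fin 6)) : (PhiWord w).length = w.length + 1 := by
  simp [PhiWord, suppPairs_length]

lemma phiWord_get (w : List (Fin 6)) (m : ℕ) (h : m < w.length + 1) :
    (PhiWord w)[m]'(by rw [phiWord_length]; exact h) =
      (phiTable (aF w m) (aF w (m + 1))).getD 0 := by
  unfold PhiWord
  rw [List.getElem_map]
  rw [suppPairs_get w m h]

lemma posSeq_zero (l : List (Fin 6)) : posSeq l 0 = 0 := by simp [posSeq]

lemma posSeq_succ (l : List (Fin 6)) (m : ℕ) (h : m < l.length) :
    posSeq l (m + 1) = posSeq l m + dirU (l[m]) := by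
  unfold posSeq
  rw [List.map_take, List.map_take, List.sum_take_succ _ m (by simpa using h)]
  simp

lemma posSeq_prefix (l l' : List (Fin 6)) (m : ℕ) (h : m ≤ l.length) :
    posSeq (l ++ l') m = posSeq l m := by
  unfold posSeq
  rw [List.take_append_of_le_length h]

end Plumbing
section Main

lemma triNum_ge {n : ℕ} (hn : 2 ≤ n) : 3 ≤ triNum n := by
  rw [triNum, Nat.le_div_iff_mul_le (by norm_num)]
  nlinarith

lemma chain_extract {w : List (Fin 6)}
    (hchain : List.Chain' (fun a b => ¬ ForbiddenTurn a b) ((0 : Fin 6) :: (w ++ [0])))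
    {m : ℕ} (hm : m < w.length + 1) : ¬ ForbiddenTurn (aF w m) (aF w (m + 1)) := by
  have hchain := List.isChain_iff_getElem.mp hchain
  have h1 : m + 1 < ((0 : Fin 6) :: (w ++ [0])).length := by simp; omega
  have := hchain m h1
  have e1 : ((0 : Fin 6) :: (w ++ [0])).get ⟨m, by simp; omega⟩ = aF w m := by
    rw [aF, List.getD_eq_getElem _ _ (by simp; omega), List.get_eq_getElem]
  have e2 : ((0 : Fin 6) :: (w ++ [0])).get ⟨m + 1, by simp; omega⟩ = aF w (m + 1) := by
    rw [List.get_eq_getElem, List.getElem_cons_succ, aF_succ,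
      List.getD_eq_getElem _ _ (by simp; omega)]
  simp only [List.get_eq_getElem] at e1 e2
  rwa [e1, e2] at this

lemma grid_of_mem {n : ℕ} {w : List (Fin 6)}
    (hrange : (Set.range fun m : Fin (w.length + 1) => posSeq w m) = inscribedGrid n)
    {m : ℕ} (hm : m < w.length + 1) :
    ∃ i j : ℕ, i + j ≤ n - 1 ∧ posSeq w m = Pt i j := by
  have : posSeq w m ∈ inscribedGrid n := by
    rw [← hrange]; exact ⟨⟨m, hm⟩, rfl⟩
  obtain ⟨i, j, hij, hp⟩ := this
  exact ⟨i, j, hij, hp⟩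

lemma defined_of_wpath {n : ℕ} (hn : 2 ≤ n) {w : List (Fin 6)} (hw : IsWPath n w) :
    ∀ m, m < w.length + 1 → (phiTable (aF w m) (aF w (m + 1))).isSome := by
  obtain ⟨⟨hlen, hinj, hrange, hstart, hend⟩, hchain⟩ := hw
  have hT := triNum_ge hn
  have hL : 2 ≤ w.length := by omega
  intro m hm
  by_contra hdef
  rcases (undef_iff _ _).mp hdef with hforb | hrev
  · exact chain_extract hchain hm hforb
  -- reversal case
  rcases Nat.eq_zero_or_pos m with rfl | hm0
  · -- m = 0 : aF w 1 = 3, so posSeq w 1 = -1 ∉ grid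
    rw [aF_zero] at hrev
    have h1 : posSeq w 1 = -1 := by
      rw [posSeq_succ w 0 (by omega), posSeq_zero, aF_get w 0 (by omega)] at *
      rw [hrev]
      norm_num [dirU3]
    obtain ⟨i, j, hij, hp⟩ := grid_of_mem hrange (show 1 < w.length + 1 by omega)
    rw [h1] at hp
    have := grid_eq (i := i) (j := j) (k := 0) (l := 0) (e1 := -1) (e2 := 0) |>.mp
      (by rw [Pt_zero, ← hp]; push_cast; ring)
    omega
  rcases Nat.lt_or_ge m w.length with hmL | hmL
  · -- interior : posSeq w (m+1) = posSeq w (m-1)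
    have hstep1 : posSeq w (m + 1) = posSeq w m + dirU (aF w (m + 1)) := by
      rw [posSeq_succ w m hmL, aF_get w m hmL]
    have hstep0 : posSeq w m = posSeq w (m - 1) + dirU (aF w m) := by
      have hlt : m - 1 < w.length := by omega
      have h' := posSeq_succ w (m - 1) hlt
      rw [show m - 1 + 1 = m from by omega] at h'
      rw [h', ← aF_get w (m - 1) hlt, show m - 1 + 1 = m from by omega]
    have key : posSeq w (m + 1) = posSeq w (m - 1) := by
      rw [hstep1, hstep0, hrev, dirU_add3]; ring
    have := hinj (a₁ := ⟨m + 1, by omega⟩) (a₂ := ⟨m - 1, by omega⟩) key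
    simp [Fin.ext_iff] at this
    omega
  · -- m = w.length : previous point would be Pt n 0
    have hmE : m = w.length := by omega
    subst hmE
    rw [aF_last] at hrev
    have ha : aF w w.length = 3 := by
      have : (0 : Fin 6) = aF w w.length + 3 := hrev
      omega
    have hstep0 : posSeq w w.length = posSeq w (w.length - 1) + dirU 3 := by
      have hlt : w.length - 1 < w.length := by omega
      have h' := posSeq_succ w (w.length - 1) hlt
      rw [show w.length - 1 + 1 = w.length by omega] at h'
      rw [h', ← ha, ← aF_get w (w.length - 1) hlt,
        show w.length - 1 + 1 = w.length from by omega]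
    obtain ⟨i, j, hij, hp⟩ := grid_of_mem hrange (show w.length - 1 < w.length + 1 by omega)
    have hPt : Pt i j = Pt (n - 1) 0 + 1 := by
      rw [← hp]
      have : posSeq w (w.length - 1) = posSeq w w.length - dirU 3 := by
        rw [hstep0]; ring
      rw [this, hend, dirU3]; ring
    have := grid_eq (i := i) (j := j) (k := n - 1) (l := 0) (e1 := 1) (e2 := 0) |>.mp
      (by rw [hPt]; push_cast; ring)
    omega

end Main
section Forward

lemma spath_of_wpath {n : ℕ} (hn : 2 ≤ n) {w : List (Fin 6)} (hw : IsWPath n w) :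
    IsSPath n (PhiWord w) := by
  obtain ⟨⟨hlen, hinj, hrange, hstart, hend⟩, hchain⟩ := hw.imp id id
  have hdef := defined_of_wpath hn hw
  have hT := triNum_ge hn
  have hL : 2 ≤ w.length := by omega
  set s := PhiWord w with hs
  have hslen : s.length = w.length + 1 := phiWord_length w
  have hphi : ∀ m (hm : m < w.length + 1),
      phiTable (aF w m) (aF w (m + 1)) = some (s[m]'(by omega)) := by
    intro m hm
    obtain ⟨o, ho⟩ := Option.isSome_iff_exists.mp (hdef m hm)
    have h1 : (PhiWord w)[m]'(by rw [phiWord_length]; exact hm)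
        = (phiTable (aF w m) (aF w (m + 1))).getD 0 := phiWord_get w m hm
    rw [ho] at h1
    have : s[m]'(by omega) = o := h1
    rw [this, ho]
  have hwa : ∀ m (hm : m < w.length + 1), (w ++ [(0:Fin 6)])[m]'(by simp; omega) = aF w (m+1) := by
    intro m hm
    rw [aF_succ, List.getD_eq_getElem _ _ (by simp; omega)]
  have hkey : ∀ m, m ≤ w.length + 1 → posSeq s m = posSeq (w ++ [0]) m + cVec (aF w m) := by
    intro m
    induction m with
    | zero => intro _; rw [posSeq_zero, posSeq_zero, aF_zero, cVec0]; ring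
    | succ k ih =>
      intro hk
      have hk' : k < w.length + 1 := by omega
      have h1 : posSeq s (k + 1) = posSeq s k + dirU (s[k]'(by omega)) :=
        posSeq_succ s k (by omega)
      have h2 : posSeq (w ++ [0]) (k + 1) = posSeq (w ++ [0]) k + dirU (aF w (k + 1)) := by
        rw [posSeq_succ (w ++ [0]) k (by simp; omega), hwa k hk']
      have h3 := step_c _ _ _ (hphi k hk')
      rw [h1, h2, ih (by omega)]
      linear_combination h3
  have hq : ∀ m, m ≤ w.length → posSeq s m = posSeq w m + cVec (aF w m) := by
    intro m hm
    rw [hkey m (by omega), posSeq_prefix w [0] m hm]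
  -- tile function
  have hgrid' : ∀ m : Fin s.length, ∃ p : ℕ × ℕ, p.1 + p.2 ≤ n - 1 ∧ posSeq w ↑m = Pt p.1 p.2 := by
    intro m
    obtain ⟨i, j, hij, hp⟩ := grid_of_mem hrange (show (m : ℕ) < w.length + 1 by omega)
    exact ⟨(i, j), hij, hp⟩
  set t : Fin s.length → {p : ℕ × ℕ // p.1 + p.2 ≤ n - 1} :=
    fun m => ⟨(hgrid' m).choose, (hgrid' m).choose_spec.1⟩ with ht
  have hPt : ∀ m : Fin s.length, posSeq w ↑m = Pt (t m).1.1 (t m).1.2 :=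
    fun m => (hgrid' m).choose_spec.2
  have hside : ∀ m : Fin s.length, IsSideOf (edgeSeg s ↑m) (t m).1.1 (t m).1.2 := by
    intro m
    have hm : (m : ℕ) < w.length + 1 := by omega
    have e1 : posSeq s ↑m = Pt (t m).1.1 (t m).1.2 + cVec (s[(m:ℕ)]'(by omega)) := by
      rw [hq ↑m (by omega), hPt m, cVec_phi (hphi ↑m hm)]
    have e2 : posSeq s (↑m + 1) = Pt (t m).1.1 (t m).1.2 + cVec (s[(m:ℕ)]'(by omega))
        + dirU (s[(m:ℕ)]'(by omega)) := by
      rw [posSeq_succ s ↑m (by omega), e1]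
    rw [edgeSeg, e1, e2]
    exact side_fwd _ _ _
  have htinj : Function.Injective t := by
    intro m m' he
    have : posSeq w ↑m = posSeq w ↑m' := by
      rw [hPt m, hPt m', he]
    have := hinj (a₁ := ⟨↑m, by omega⟩) (a₂ := ⟨↑m', by omega⟩) this
    rw [Fin.ext_iff] at this ⊢
    exact this
  refine ⟨by omega, posSeq_zero s, ?_, ?_, t, hside, htinj, ?_⟩
  · -- endpoint
    rw [hslen, hkey (w.length + 1) (by omega), aF_last, cVec0,
      posSeq_succ (w ++ [0]) w.length (by simp), posSeq_prefix w [0] w.length (le_refl _),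
      hwa w.length (by omega), aF_last, dirU0, hend, Pt_eq]
    push_cast [Nat.cast_sub (by omega : 1 ≤ n)]
    ring
  · -- edge injectivity
    intro m m' he
    apply htinj
    have := side_unique (hside m) (he ▸ hside m')
    ext
    · exact this.1
    · exact this.2
  · -- surjectivity
    intro p
    have hmem : Pt p.1.1 p.1.2 ∈ inscribedGrid n := ⟨p.1.1, p.1.2, p.2, rfl⟩
    rw [← hrange] at hmem
    obtain ⟨mf, hmf⟩ := hmem
    refine ⟨⟨↑mf, by omega⟩, ?_⟩
    have h0 := hPt ⟨↑mf, by omega⟩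
    simp only at h0 hmf
    obtain ⟨h1, h2⟩ := Pt_inj (hmf.symm.trans h0)
    ext
    · exact h1.symm
    · exact h2.symm

end Forward
section Inj

lemma phiVal {w : List (Fin 6)} (m : ℕ) (hm : m < w.length + 1) {o : Fin 6}
    (ho : phiTable (aF w m) (aF w (m + 1)) = some o) :
    (PhiWord w)[m]'(by rw [phiWord_length]; omega) = o := by
  rw [phiWord_get w m hm, ho]; rfl

lemma inj_of_defined {w w' : List (Fin 6)}
    (hd : ∀ m, m < w.length + 1 → (phiTable (aF w m) (aF w (m + 1))).isSome)
    (hd' : ∀ m, m < w'.length + 1 → (phiTable (aF w' m) (aF w' (m + 1))).isSome)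
    (h : PhiWord w = PhiWord w') : w = w' := by
  have hlen : w.length = w'.length := by
    have := congrArg List.length h
    rw [phiWord_length, phiWord_length] at this
    omega
  apply List.ext_getElem hlen
  intro m hm hm'
  obtain ⟨o1, ho1⟩ := Option.isSome_iff_exists.mp (hd m (by omega))
  obtain ⟨o2, ho2⟩ := Option.isSome_iff_exists.mp (hd (m + 1) (by omega))
  obtain ⟨o1', ho1'⟩ := Option.isSome_iff_exists.mp (hd' m (by omega))
  obtain ⟨o2', ho2'⟩ := Option.isSome_iff_exists.mp (hd' (m + 1) (by omega))
  have g1 : o1 = o1' := by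
    rw [← phiVal m (by omega) ho1, ← phiVal m (by omega) ho1']
    congr 1
  have g2 : o2 = o2' := by
    rw [← phiVal (m + 1) (by omega) ho2, ← phiVal (m + 1) (by omega) ho2']
    congr 1
  have p1 : psi o1 o2 = aF w (m + 1) := psi_spec _ _ _ _ _ ho1 ho2
  have p1' : psi o1' o2' = aF w' (m + 1) := psi_spec _ _ _ _ _ ho1' ho2'
  rw [← aF_get w m hm, ← aF_get w' m hm', ← p1, ← p1', g1, g2]

end Inj
section Backward

lemma A_get {w : List (Fin 6)} {m : ℕ} (h : m < w.length + 2) :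
    ∀ (hh : m < ((0:Fin 6) :: (w ++ [0])).length),
    ((0:Fin 6) :: (w ++ [0]))[m] = aF w m := by
  intro hh
  rw [aF, List.getD_eq_getElem _ _ (by simp; omega)]

lemma wpath_of_spath {n : ℕ} (hn : 2 ≤ n) {s : List (Fin 6)} (hS : IsSPath n s) :
    ∃ w, IsWPath n w ∧ PhiWord w = s := by
  obtain ⟨hlen, h0, hendS, hedgeinj, t, hside, htinj, htsurj⟩ := hS
  have hT : 3 ≤ triNum n := triNum_ge hn
  set T := triNum n with hTdef
  set sE : ℕ → Fin 6 := fun m => s.getD m 0 with hsE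
  have sE_eq : ∀ m (h : m < s.length), sE m = s[m] := by
    intro m h; rw [hsE]; exact List.getD_eq_getElem _ _ h
  have qstep : ∀ m, m < s.length → posSeq s (m + 1) = posSeq s m + dirU (sE m) := by
    intro m h; rw [posSeq_succ s m h, sE_eq m h]
  have hA : ∀ m (hm : m < s.length),
      posSeq s m = Pt (t ⟨m, hm⟩).1.1 (t ⟨m, hm⟩).1.2 + cVec (sE m) := by
    intro m hm
    have h1 := hside ⟨m, hm⟩
    rw [edgeSeg] at h1
    simp only at h1
    rw [qstep m hm] at h1
    exact side_start h1
  have hcompat : ∀ m, m + 1 < s.length → Compat (sE m) (sE (m + 1)) := by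
    intro m hm
    by_contra hnc
    rcases noncompat _ _ hnc with h3 | hcv
    · -- reversal
      have e : edgeSeg s (m + 1) = edgeSeg s m := by
        rw [edgeSeg, edgeSeg, qstep (m+1) hm, qstep m (by omega), h3, dirU_add3, segment_symm]
        congr 1 <;> ring
      have := hedgeinj ⟨m + 1, hm⟩ ⟨m, by omega⟩ e
      rw [Fin.ext_iff] at this
      simp at this
    · -- same tile
      have e1 := hA m (by omega)
      have e2 := hA (m + 1) hm
      have key : Pt (t ⟨m+1, hm⟩).1.1 (t ⟨m+1, hm⟩).1.2
          = Pt (t ⟨m, by omega⟩).1.1 (t ⟨m, by omega⟩).1.2 := by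
        have hq := qstep m (by omega)
        rw [e1, e2] at hq
        linear_combination hq + hcv
      obtain ⟨k1, k2⟩ := Pt_inj key
      have : t ⟨m+1, hm⟩ = t ⟨m, by omega⟩ := by
        ext
        · exact k1
        · exact k2
      have := htinj this
      rw [Fin.ext_iff] at this
      simp at this
  have hfirst : sE 0 = 0 ∨ sE 0 = 1 := by
    have hA0 := hA 0 (by omega)
    rw [posSeq_zero] at hA0
    rcases fin6_cases (sE 0) with h | h | h | h | h | h <;> rw [h] at hA0 ⊢
    · left; rfl
    · right; rfl
    · exfalso
      rw [cVec2] at hA0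
      have := grid_eq (i := (t ⟨0, by omega⟩).1.1) (j := (t ⟨0, by omega⟩).1.2)
        (k := 0) (l := 0) (e1 := -1) (e2 := 0) |>.mp
        (by rw [Pt_zero]; push_cast; linear_combination - hA0)
      omega
    · exfalso
      rw [cVec3] at hA0
      have := grid_eq (i := (t ⟨0, by omega⟩).1.1) (j := (t ⟨0, by omega⟩).1.2)
        (k := 0) (l := 0) (e1 := -1) (e2 := 0) |>.mp
        (by rw [Pt_zero]; push_cast; linear_combination - hA0)
      omega
    · exfalso
      rw [cVec4] at hA0
      have := grid_eq (i := (t ⟨0, by omega⟩).1.1) (j := (t ⟨0, by omega⟩).1.2)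
        (k := 0) (l := 0) (e1 := 0) (e2 := -1) |>.mp
        (by rw [Pt_zero]; push_cast; linear_combination - hA0)
      omega
    · exfalso
      rw [cVec5] at hA0
      have := grid_eq (i := (t ⟨0, by omega⟩).1.1) (j := (t ⟨0, by omega⟩).1.2)
        (k := 0) (l := 0) (e1 := 0) (e2 := -1) |>.mp
        (by rw [Pt_zero]; push_cast; linear_combination - hA0)
      omega
  have hlastq : posSeq s s.length = (n : ℂ) := by
    rw [hendS, dirU0]; ring
  have hlast : sE (T - 1) = 0 ∨ sE (T - 1) = 5 := by
    have hm : T - 1 < s.length := by omega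
    have hA1 := hA (T - 1) hm
    have hq := qstep (T - 1) hm
    rw [show T - 1 + 1 = s.length from by omega, hlastq, hA1] at hq
    -- hq : (n:ℂ) = Pt i j + cVec o + dirU o
    have hij := (t ⟨T - 1, hm⟩).2
    rcases fin6_cases (sE (T - 1)) with h | h | h | h | h | h <;> rw [h] at hq ⊢
    · left; rfl
    · exfalso
      rw [cVec1, dirU1] at hq
      have := grid_eq (i := (t ⟨T-1, hm⟩).1.1) (j := (t ⟨T-1, hm⟩).1.2)
        (k := n) (l := 0) (e1 := 0) (e2 := -1) |>.mp
        (by rw [Pt_eq n 0]; push_cast; linear_combination - hq)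
      omega
    · exfalso
      rw [cVec2, dirU2] at hq
      have := grid_eq (i := (t ⟨T-1, hm⟩).1.1) (j := (t ⟨T-1, hm⟩).1.2)
        (k := n) (l := 0) (e1 := 0) (e2 := -1) |>.mp
        (by rw [Pt_eq n 0]; push_cast; linear_combination - hq)
      omega
    · exfalso
      rw [cVec3, dirU3] at hq
      have := grid_eq (i := (t ⟨T-1, hm⟩).1.1) (j := (t ⟨T-1, hm⟩).1.2)
        (k := n) (l := 0) (e1 := 0) (e2 := 0) |>.mp
        (by rw [Pt_eq n 0]; push_cast; linear_combination - hq)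
      omega
    · exfalso
      rw [cVec4, dirU4] at hq
      have := grid_eq (i := (t ⟨T-1, hm⟩).1.1) (j := (t ⟨T-1, hm⟩).1.2)
        (k := n) (l := 0) (e1 := 0) (e2 := 0) |>.mp
        (by rw [Pt_eq n 0]; push_cast; linear_combination - hq)
      omega
    · right; rfl
  -- decoded supplemented word
  set a : ℕ → Fin 6 :=
    fun m => if m = 0 then 0 else if m ≤ T - 1 then psi (sE (m - 1)) (sE m) else 0 with ha
  have ha0 : a 0 = 0 := by simp [ha]
  have haM : ∀ m, 1 ≤ m → m ≤ T - 1 → a m = psi (sE (m - 1)) (sE m) := by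
    intro m h1 h2; simp only [ha]; rw [if_neg (by omega), if_pos (by omega)]
  have haT : ∀ m, T - 1 < m → a m = 0 := by
    intro m h1; simp only [ha]; rw [if_neg (by omega), if_neg (by omega)]
  have hC : ∀ m, m < T → phiTable (a m) (a (m + 1)) = some (sE m) := by
    intro m hm
    rcases Nat.eq_zero_or_pos m with rfl | hm0
    · rw [ha0, haM 1 (by omega) (by omega)]
      simpa using L_first (sE 0) (sE 1) hfirst (hcompat 0 (by omega))
    rcases Nat.lt_or_ge m (T - 1) with hmlt | hmge
    · rw [haM m (by omega) (by omega), haM (m + 1) (by omega) (by omega)]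
      have r1 := hcompat (m - 1) (by omega)
      rw [show m - 1 + 1 = m from by omega] at r1
      have r2 := hcompat m (by omega)
      simpa using L_mid (sE (m - 1)) (sE m) (sE (m + 1)) r1 r2
    · have hmE : m = T - 1 := by omega
      subst hmE
      have e1 : a (T - 1 + 1) = 0 := by
        rw [show T - 1 + 1 = T from by omega]; exact haT T (by omega)
      rw [haM (T - 1) (by omega) (le_refl _), e1]
      have r1 := hcompat (T - 2) (by omega)
      rw [show T - 2 + 1 = T - 1 from by omega] at r1
      rw [show T - 1 - 1 = T - 2 from by omega]
      exact L_end (sE (T - 2)) (sE (T - 1)) r1 hlast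
  -- the decoded word
  set w : List (Fin 6) := List.ofFn (fun k : Fin (T - 1) => a (k + 1)) with hwdef
  have hwlen : w.length = T - 1 := by simp [hwdef]
  have hwget : ∀ k, ∀ hk : k < T - 1, w[k]'(by omega) = a (k + 1) := by
    intro k hk
    simp [hwdef]
  have haF : ∀ m, m ≤ T → aF w m = a m := by
    intro m hm
    rcases Nat.eq_zero_or_pos m with rfl | hm0
    · rw [aF_zero, ha0]
    rcases Nat.lt_or_ge m T with hmlt | hmge
    · have h1 : m - 1 < w.length := by omega
      have := aF_get w (m - 1) h1
      rw [show m - 1 + 1 = m from by omega] at this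
      rw [this]
      have := hwget (m - 1) (by omega)
      rw [show m - 1 + 1 = m from by omega] at this
      exact this
    · have hmT : m = T := by omega
      subst hmT
      rw [haT T (by omega)]
      have := aF_last w
      rw [hwlen, show T - 1 + 1 = T from by omega] at this
      exact this
  have hD : ∀ m, m < T → phiTable (aF w m) (aF w (m + 1)) = some (sE m) := by
    intro m hm
    rw [haF m (by omega), haF (m + 1) (by omega)]
    exact hC m hm
  have hPhi : PhiWord w = s := by
    apply List.ext_getElem (by rw [phiWord_length, hwlen]; omega)
    intro m hm hm'
    have hmT : m < T := by rw [phiWord_length, hwlen] at hm; omega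
    exact (phiVal m (by omega) (hD m hmT)).trans (sE_eq m (by omega))
  have hpos : ∀ m, m ≤ T - 1 → posSeq w m = posSeq s m - cVec (a m) := by
    intro m
    induction m with
    | zero => intro _; rw [posSeq_zero, posSeq_zero, ha0, cVec0]; ring
    | succ k ih =>
      intro hk
      have hk' : k < T - 1 := by omega
      have h1 : posSeq w (k + 1) = posSeq w k + dirU (a (k + 1)) := by
        rw [posSeq_succ w k (by omega), hwget k hk']
      have h2 := qstep k (by omega)
      have h3 := step_c _ _ _ (hC k (by omega))
      rw [h1, h2, ih (by omega)]
      linear_combination - h3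
  have htile : ∀ m, ∀ hm : m < s.length,
      posSeq w m = Pt (t ⟨m, hm⟩).1.1 (t ⟨m, hm⟩).1.2 := by
    intro m hm
    have h1 := hA m hm
    rw [hpos m (by omega), h1, cVec_phi (hC m (by omega))]
    ring
  refine ⟨w, ⟨⟨by omega, ?_, ?_, ?_, ?_⟩, ?_⟩, hPhi⟩
  · -- injective
    intro m1 m2 h
    have hs1 : (m1 : ℕ) < s.length := by omega
    have hs2 : (m2 : ℕ) < s.length := by omega
    simp only at h
    rw [htile ↑m1 hs1, htile ↑m2 hs2] at h
    obtain ⟨k1, k2⟩ := Pt_inj h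
    have : t ⟨↑m1, hs1⟩ = t ⟨↑m2, hs2⟩ := by
      ext
      · exact k1
      · exact k2
    have := htinj this
    rw [Fin.ext_iff] at this ⊢
    exact this
  · -- range
    ext z
    constructor
    · rintro ⟨m, rfl⟩
      have hs1 : (m : ℕ) < s.length := by omega
      exact ⟨_, _, (t ⟨↑m, hs1⟩).2, htile ↑m hs1⟩
    · rintro ⟨i, j, hij, rfl⟩
      obtain ⟨mf, hmf⟩ := htsurj ⟨(i, j), hij⟩
      obtain ⟨mv, hv⟩ := mf
      refine ⟨⟨mv, by omega⟩, ?_⟩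
      simp only
      rw [htile mv hv, hmf]
  · -- start
    rw [posSeq_zero, Pt_zero]
  · -- end
    have h1 := hpos (T - 1) (le_refl _)
    have h2 := qstep (T - 1) (by omega)
    rw [show T - 1 + 1 = s.length from by omega, hlastq] at h2
    have h3 := step_c _ _ _ (hC (T - 1) (by omega))
    have e0 : a (T - 1 + 1) = 0 := by
      rw [show T - 1 + 1 = T from by omega]; exact haT T (by omega)
    rw [e0, dirU0, cVec0] at h3
    have hPn : Pt (n - 1) 0 = (n : ℂ) - 1 := by
      rw [Pt_eq]
      push_cast [Nat.cast_sub (by omega : 1 ≤ n)]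
      ring
    rw [hwlen, h1, hPn]
    linear_combination - h2 - h3
  · -- chain
    refine List.isChain_iff_getElem.mpr ?_
    intro i hi
    have hi' : i < w.length + 1 := by simp at hi; omega
    have g1 : ((0:Fin 6) :: (w ++ [0])).get ⟨i, by simp; omega⟩ = aF w i :=
      A_get (by omega) _
    have g2 : ((0:Fin 6) :: (w ++ [0])).get ⟨i + 1, by simp; omega⟩ = aF w (i + 1) :=
      A_get (by omega) _
    simp only [List.get_eq_getElem] at g1 g2
    rw [g1, g2]
    apply def_not_forbidden
    rw [hD i (by omega)]
    rfl

end Backward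
/-- For every `n ≥ 2`, `φ` is defined on every consecutive pair of
the supplemented word of every W-path of order `n`, and `Φ` is a bijection from the
set of W-paths of order `n` onto the set of S-paths of order `n`. -/
theorem phi_defined_and_bijective (n : ℕ) (hn : 2 ≤ n) :
    (∀ w, IsWPath n w → ∀ p ∈ suppPairs w, (phiTable p.1 p.2).isSome) ∧
    Set.BijOn PhiWord {w | IsWPath n w} {s | IsSPath n s} := by
  constructor
  · intro w hw p hp
    obtain ⟨m, hm, rfl⟩ := mem_suppPairs hp
    exact defined_of_wpath hn hw m hm
  · refine ⟨?_, ?_, ?_⟩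
    · intro w hw
      exact spath_of_wpath hn hw
    · intro w hw w' hw' h
      exact inj_of_defined (defined_of_wpath hn hw) (defined_of_wpath hn hw') h
    · intro s hs
      obtain ⟨w, hw, hPhi⟩ := wpath_of_spath hn hs
      exact ⟨w, hw, hPhi⟩
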